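/- In the quasi-consecutive pattern poset, suppose σ occurs precisely once in τ, the occurrence is not consecutive (the first entry of the occurrence is not adjacent in τ to the second), and the occurrence involves none of the first entry, second entry, and last entry of τ. Then μ(σ, τ) = 0. -/
import Mathlib


open scoped Classical

/-- A finite permutation of arbitrary length: a length `n` together with a
permutation of `Fin n` (in one-line notation, the entry at position `i` is
its value at `i`). -/
abbrev QPerm : Type := Σ n : ℕ, Equiv.Perm (Fin n)

/-- `IsOcc a σ τ f` : the strictly monotone position map `f` selects an
occurrence of the pattern `σ` in `τ` (order-isomorphically), where for every
gap index `j ≥ 1` (1-indexed) with `a j = false` the `j`-th and `(j+1)`-th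
selected positions must be adjacent in `τ`. -/
def IsOcc (a : ℕ → Bool) {k n : ℕ} (σ : Equiv.Perm (Fin k)) (τ : Equiv.Perm (Fin n))
    (f : Fin k → Fin n) : Prop :=
  StrictMono f ∧ (∀ i j : Fin k, σ i < σ j ↔ τ (f i) < τ (f j)) ∧
    ∀ (i : ℕ) (h : i + 1 < k), a (i + 1) = false →
      (f ⟨i + 1, h⟩ : ℕ) = (f ⟨i, Nat.lt_of_succ_lt h⟩ : ℕ) + 1

/-- `σ` occurs in `τ` as an `a`-vincular pattern. -/
def VOcc (a : ℕ → Bool) (σ τ : QPerm) : Prop :=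
  ∃ f : Fin σ.1 → Fin τ.1, IsOcc a σ.2 τ.2 f

/-- Covering relation of the `a`-vincular pattern poset. -/
def VCov (a : ℕ → Bool) (σ τ : QPerm) : Prop :=
  σ.1 + 1 = τ.1 ∧ VOcc a σ τ

/-- The `a`-vincular pattern order: reflexive-transitive closure of covering. -/
def VLe (a : ℕ → Bool) (σ τ : QPerm) : Prop :=
  Relation.ReflTransGen (VCov a) σ τ

/-- Occurrence as an `A`-vincular pattern for a matrix `A` (rows and columns
1-indexed via `A i j`); a pattern of length `k` uses row `k - 1`. -/
def MOcc (A : ℕ → ℕ → Bool) (σ τ : QPerm) : Prop :=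
  VOcc (fun j => A (σ.1 - 1) j) σ τ

/-- Covering relation of the `A`-vincular pattern poset. -/
def MCov (A : ℕ → ℕ → Bool) (σ τ : QPerm) : Prop :=
  σ.1 + 1 = τ.1 ∧ MOcc A σ τ

/-- The `A`-vincular pattern order. -/
def MLe (A : ℕ → ℕ → Bool) (σ τ : QPerm) : Prop :=
  Relation.ReflTransGen (MCov A) σ τ

/-- The quasi-consecutive adjacency vector `a = (1,0,0,…)` (1-indexed). -/
def qa : ℕ → Bool := fun j => decide (j = 1)

/-- Quasi-consecutive pattern occurrence. -/
def QOcc (σ τ : QPerm) : Prop := VOcc qa σ τ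

/-- Covering in the quasi-consecutive pattern poset. -/
def QCov (σ τ : QPerm) : Prop := VCov qa σ τ

/-- The quasi-consecutive pattern poset order. -/
def QLe (σ τ : QPerm) : Prop := VLe qa σ τ

/-- All permutations of length at most `n`, as a finset. -/
def permsUpTo (n : ℕ) : Finset QPerm :=
  (Finset.range (n + 1)).sigma fun _ => Finset.univ

/-- Möbius function of the quasi-consecutive pattern poset, computed with
fuel (the fuel `τ.1` always suffices, since lengths strictly increase along
the order). -/
noncomputable def qMuAux : ℕ → QPerm → QPerm → ℤ
  | 0, σ, τ => if σ = τ then 1 else 0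
  | m + 1, σ, τ =>
      if σ = τ then 1
      else -∑ z ∈ (permsUpTo τ.1).filter fun z => QLe σ z ∧ QLe z τ ∧ z ≠ τ,
            qMuAux m σ z

/-- The Möbius function of the quasi-consecutive pattern poset. -/
noncomputable def qMu (σ τ : QPerm) : ℤ := qMuAux τ.1 σ τ

/-- The interval `[σ, τ]` in the quasi-consecutive pattern poset. -/
def QInterval (σ τ : QPerm) : Set QPerm := {ρ | QLe σ ρ ∧ QLe ρ τ}

/-- The interval `[σ, τ]` is a chain. -/
def QChain (σ τ : QPerm) : Prop :=
  ∀ ρ₁ ρ₂ : QPerm, ρ₁ ∈ QInterval σ τ → ρ₂ ∈ QInterval σ τ → QLe ρ₁ ρ₂ ∨ QLe ρ₂ ρ₁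

/-- The interval `[σ, τ]` is order-isomorphic to the product of a chain with
`p + 1` elements and a chain with `q + 1` elements (componentwise order). -/
def IsGridInterval (σ τ : QPerm) (p q : ℕ) : Prop :=
  ∃ e : QInterval σ τ ≃ Fin (p + 1) × Fin (q + 1),
    ∀ ρ₁ ρ₂ : QInterval σ τ, QLe ρ₁.1 ρ₂.1 ↔ e ρ₁ ≤ e ρ₂

/-- The occurrence `f` involves position `i` (0-indexed) of the big permutation. -/
def Involves {k n : ℕ} (f : Fin k → Fin n) (i : ℕ) : Prop :=
  ∃ j : Fin k, (f j : ℕ) = i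

/-- The occurrence `f` is consecutive: all selected positions are adjacent. -/
def ConsecOcc {k n : ℕ} (f : Fin k → Fin n) : Prop :=
  ∀ (i : ℕ) (h : i + 1 < k),
    (f ⟨i + 1, h⟩ : ℕ) = (f ⟨i, Nat.lt_of_succ_lt h⟩ : ℕ) + 1

/-- The first two entries of `τ` are not consecutive integers. -/
def NotConsecFirstTwo (τ : QPerm) : Prop :=
  ∀ i j : Fin τ.1, (i : ℕ) = 0 → (j : ℕ) = 1 →
    (τ.2 i : ℕ) + 1 ≠ (τ.2 j : ℕ) ∧ (τ.2 j : ℕ) + 1 ≠ (τ.2 i : ℕ)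

/-- `τ` is a monotone (increasing or decreasing) permutation. -/
def IsMonotonePerm (τ : QPerm) : Prop :=
  (∀ i j : Fin τ.1, i < j → τ.2 i < τ.2 j) ∨ (∀ i j : Fin τ.1, i < j → τ.2 j < τ.2 i)

section Aux

lemma sm_le {a b : ℕ} {f : Fin a → Fin b} (hf : StrictMono f) :
    ∀ v (h : v < a), v ≤ (f ⟨v, h⟩ : ℕ) := by
  intro v
  induction v with
  | zero => intro h; exact Nat.zero_le _
  | succ v ih =>
      intro h
      have h1 : v < a := Nat.lt_of_succ_lt h
      have := hf (show (⟨v, h1⟩ : Fin a) < ⟨v+1, h⟩ by simp [Fin.lt_def])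
      have := ih h1
      omega

lemma sm_gap {a b : ℕ} {f : Fin a → Fin b} (hf : StrictMono f) :
    ∀ d v (hv : v < a) (h : v + d < a), (f ⟨v, hv⟩ : ℕ) + d ≤ (f ⟨v + d, h⟩ : ℕ) := by
  intro d
  induction d with
  | zero => intro v hv h; simp
  | succ d ih =>
      intro v hv h
      have h1 : v + d < a := by omega
      have := ih v hv h1
      have h2 := hf (show (⟨v+d, h1⟩ : Fin a) < ⟨v+(d+1), h⟩ by simp [Fin.lt_def])
      simp only [Fin.lt_def] at h2
      omega

lemma strictMono_fin_id {k : ℕ} {s : Fin k → Fin k} (h : StrictMono s) (i : Fin k) : s i = i := by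
  have h1 : (i : ℕ) ≤ (s i : ℕ) := by
    have := sm_le h i.1 i.2
    simpa using this
  have h2 : (s i : ℕ) ≤ (i : ℕ) := by
    have hlt : (i : ℕ) + (k - 1 - i) < k := by omega
    have := sm_gap h (k - 1 - (i : ℕ)) i.1 i.2 hlt
    have hub : (s ⟨(i : ℕ) + (k - 1 - (i : ℕ)), hlt⟩ : ℕ) < k := Fin.is_lt _
    simp only [Fin.eta] at this
    omega
  exact Fin.ext (le_antisymm h2 h1)

lemma perm_eq_of_iso {k : ℕ} {p q : Equiv.Perm (Fin k)}
    (h : ∀ i j, p i < p j ↔ q i < q j) : p = q := by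
  have hs : StrictMono (fun x => q (p.symm x)) := by
    intro x y hxy
    have : p (p.symm x) < p (p.symm y) := by simpa using hxy
    exact (h _ _).mp this
  ext i
  have h2 : q i = p i := by simpa using strictMono_fin_id hs (p i)
  exact congrArg Fin.val h2.symm

/-- The pattern of `t` along an injective position map `e`. -/
noncomputable def restrict {m n : ℕ} (t : Equiv.Perm (Fin n)) (e : Fin m → Fin n)
    (he : Function.Injective e) : Equiv.Perm (Fin m) :=
  Equiv.ofBijective
    (fun i => ⟨(Finset.univ.filter fun j => t (e j) < t (e i)).card, by
      have hss : (Finset.univ.filter fun j => t (e j) < t (e i)) ⊂ Finset.univ := by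
        rw [Finset.ssubset_iff_of_subset (Finset.filter_subset _ _)]
        exact ⟨i, Finset.mem_univ i, by simp⟩
      have := Finset.card_lt_card hss
      simpa using this⟩)
    (by
      apply Finite.injective_iff_bijective.mp
      have key : ∀ i j : Fin m, t (e i) < t (e j) →
          (Finset.univ.filter fun w => t (e w) < t (e i)).card <
          (Finset.univ.filter fun w => t (e w) < t (e j)).card := by
        intro i j hij
        apply Finset.card_lt_card
        constructor
        · intro w hw
          simp only [Finset.mem_filter, Finset.mem_univ, true_and] at hw ⊢
          exact hw.trans hij
        · intro hsub
          have : i ∈ (Finset.univ.filter fun w => t (e w) < t (e j)) := by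
            simp [hij]
          have := hsub this
          simp at this
      intro i j hij
      by_contra hne
      have hne' : t (e i) ≠ t (e j) := fun hh =>
        hne (he (t.injective hh))
      rcases lt_or_gt_of_ne hne' with hlt | hgt
      · have := key i j hlt
        simp only [Fin.mk.injEq] at hij
        omega
      · have := key j i hgt
        simp only [Fin.mk.injEq] at hij
        omega)

lemma restrict_lt_iff {m n : ℕ} (t : Equiv.Perm (Fin n)) (e : Fin m → Fin n)
    (he : Function.Injective e) (i j : Fin m) :
    restrict t e he i < restrict t e he j ↔ t (e i) < t (e j) := by
  constructor
  · intro hlt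
    by_contra hnot
    push_neg at hnot
    rcases eq_or_lt_of_le hnot with heq | hgt
    · have : i = j := he (t.injective heq.symm)
      subst this; exact lt_irrefl _ hlt
    · have key : (Finset.univ.filter fun w => t (e w) < t (e j)).card ≤
          (Finset.univ.filter fun w => t (e w) < t (e i)).card := by
        apply Finset.card_le_card
        intro w hw
        simp only [Finset.mem_filter, Finset.mem_univ, true_and] at hw ⊢
        exact hw.trans hgt
      have hv := Fin.lt_def.mp hlt
      have e1 : ((restrict t e he) i : ℕ) =
          (Finset.univ.filter fun w => t (e w) < t (e i)).card := rfl
      have e2 : ((restrict t e he) j : ℕ) =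
          (Finset.univ.filter fun w => t (e w) < t (e j)).card := rfl
      rw [e1, e2] at hv
      omega
  · intro hlt
    have : (Finset.univ.filter fun w => t (e w) < t (e i)).card <
        (Finset.univ.filter fun w => t (e w) < t (e j)).card := by
      apply Finset.card_lt_card
      constructor
      · intro w hw
        simp only [Finset.mem_filter, Finset.mem_univ, true_and] at hw ⊢
        exact hw.trans hlt
      · intro hsub
        have hmem : i ∈ (Finset.univ.filter fun w => t (e w) < t (e j)) := by simp [hlt]
        have := hsub hmem
        simp at this
    rw [Fin.lt_def]
    have e1 : ((restrict t e he) i : ℕ) =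
        (Finset.univ.filter fun w => t (e w) < t (e i)).card := rfl
    have e2 : ((restrict t e he) j : ℕ) =
        (Finset.univ.filter fun w => t (e w) < t (e j)).card := rfl
    rw [e1, e2]
    exact this

end Aux

section Aux2

lemma qa_eq_false {i : ℕ} (h : i ≠ 1) : qa i = false := by simp [qa, h]

lemma ne_one_of_qa {i : ℕ} (h : qa i = false) : i ≠ 1 := by simpa [qa] using h

lemma isOcc_id {k : ℕ} (p : Equiv.Perm (Fin k)) : IsOcc qa p p id :=
  ⟨strictMono_id, fun _ _ => Iff.rfl, fun _ _ _ => rfl⟩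

lemma isOcc_comp {k m n : ℕ} {p : Equiv.Perm (Fin k)} {q : Equiv.Perm (Fin m)}
    {r : Equiv.Perm (Fin n)} {f : Fin k → Fin m} {g : Fin m → Fin n}
    (hf : IsOcc qa p q f) (hg : IsOcc qa q r g) : IsOcc qa p r (g ∘ f) := by
  obtain ⟨hf1, hf2, hf3⟩ := hf
  obtain ⟨hg1, hg2, hg3⟩ := hg
  refine ⟨hg1.comp hf1, fun i j => (hf2 i j).trans (hg2 _ _), ?_⟩
  intro i h ha
  have hi1 : i + 1 ≠ 1 := ne_one_of_qa ha
  have hstep := hf3 i h ha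
  set p0 : Fin m := f ⟨i, Nat.lt_of_succ_lt h⟩ with hp0
  have hp0ge : (i : ℕ) ≤ (p0 : ℕ) := sm_le hf1 i _
  have hlt : (p0 : ℕ) + 1 < m := by rw [← hstep]; exact (f ⟨i+1, h⟩).2
  have hg3' := hg3 (p0 : ℕ) hlt (qa_eq_false (by omega))
  have hf1e : f ⟨i+1, h⟩ = ⟨(p0 : ℕ)+1, hlt⟩ := Fin.ext hstep
  simp only [Function.comp_apply]
  rw [hf1e, hg3', ← hp0, Fin.eta]

lemma isOcc_len_le {k n : ℕ} {p : Equiv.Perm (Fin k)} {q : Equiv.Perm (Fin n)}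
    {f : Fin k → Fin n} (hf : IsOcc qa p q f) : k ≤ n := by
  cases k with
  | zero => exact Nat.zero_le _
  | succ k =>
      have := sm_le hf.1 k (Nat.lt_succ_self k)
      have h2 := (f ⟨k, Nat.lt_succ_self k⟩).2
      omega

lemma qocc_of_qle {σ τ : QPerm} (h : QLe σ τ) : QOcc σ τ := by
  induction h with
  | refl => exact ⟨id, isOcc_id _⟩
  | tail h1 h2 ih =>
      obtain ⟨f, hf⟩ := ih
      obtain ⟨g, hg⟩ := h2.2
      exact ⟨g ∘ f, isOcc_comp hf hg⟩

lemma qle_len_le {σ τ : QPerm} (h : QLe σ τ) : σ.1 ≤ τ.1 := by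
  induction h with
  | refl => exact le_refl _
  | tail h1 h2 ih => have := h2.1; omega

lemma qle_len_lt {σ τ : QPerm} (h : QLe σ τ) (hne : σ ≠ τ) : σ.1 < τ.1 := by
  rcases Relation.ReflTransGen.cases_tail h with heq | ⟨c, hac, hcb⟩
  · exact absurd heq.symm hne
  · have := qle_len_le hac
    have := hcb.1
    omega

lemma qocc_eq_of_len {σ τ : QPerm} (h : QOcc σ τ) (hlen : σ.1 = τ.1) : σ = τ := by
  obtain ⟨k, p⟩ := σ
  obtain ⟨m, q⟩ := τ
  simp only at hlen
  subst hlen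
  obtain ⟨f, hf1, hf2, hf3⟩ := h
  have hid : ∀ i, f i = i := strictMono_fin_id hf1
  have hpq : p = q := by
    apply perm_eq_of_iso
    intro i j
    rw [hf2 i j, hid i, hid j]
  rw [hpq]

lemma isOcc_restrict {m n : ℕ} (t : Equiv.Perm (Fin n)) (e : Fin m → Fin n)
    (hmono : StrictMono e)
    (hgap : ∀ (i : ℕ) (h : i+1 < m), qa (i+1) = false →
      ((e ⟨i+1, h⟩ : ℕ) = (e ⟨i, Nat.lt_of_succ_lt h⟩ : ℕ) + 1)) :
    IsOcc qa (restrict t e hmono.injective) t e :=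
  ⟨hmono, fun i j => restrict_lt_iff t e hmono.injective i j, hgap⟩

lemma isOcc_factor {k m n : ℕ} {p : Equiv.Perm (Fin k)} {t : Equiv.Perm (Fin n)}
    {e : Fin m → Fin n} {g : Fin k → Fin n} (hmono : StrictMono e)
    (hg : IsOcc qa p t g) (h : Fin k → Fin m) (hcomp : ∀ j, e (h j) = g j)
    (hgap : ∀ (i : ℕ) (hh : i+1 < k), qa (i+1) = false →
      ((h ⟨i+1, hh⟩ : ℕ) = (h ⟨i, Nat.lt_of_succ_lt hh⟩ : ℕ) + 1)) :
    IsOcc qa p (restrict t e hmono.injective) h := by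
  refine ⟨?_, ?_, hgap⟩
  · intro a b hab
    have : e (h a) < e (h b) := by rw [hcomp a, hcomp b]; exact hg.1 hab
    exact hmono.lt_iff_lt.mp this
  · intro i j
    rw [hg.2.1 i j, restrict_lt_iff, hcomp i, hcomp j]

end Aux2

section Aux3

lemma occ_block_val {k n : ℕ} {p : Equiv.Perm (Fin k)} {q : Equiv.Perm (Fin n)}
    {g : Fin k → Fin n} (hg : IsOcc qa p q g) :
    ∀ d i (hi1 : 1 ≤ i) (hi : i < k) (h2 : i + d < k),
      (g ⟨i + d, h2⟩ : ℕ) = (g ⟨i, hi⟩ : ℕ) + d := by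
  intro d
  induction d with
  | zero => intro i hi1 hi h2; rfl
  | succ d ihd =>
      intro i hi1 hi h2
      have hklt : i + d + 1 < k := by omega
      have hadlt : i + d < k := by omega
      have hstep := hg.2.2 (i+d) hklt (qa_eq_false (by omega))
      have ih2 := ihd i hi1 hi hadlt
      calc (g ⟨i + (d+1), h2⟩ : ℕ)
          = (g ⟨i + d + 1, hklt⟩ : ℕ) := rfl
        _ = (g ⟨i + d, Nat.lt_of_succ_lt hklt⟩ : ℕ) + 1 := hstep
        _ = (g ⟨i + d, hadlt⟩ : ℕ) + 1 := rfl
        _ = ((g ⟨i, hi⟩ : ℕ) + d) + 1 := by rw [ih2]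
        _ = (g ⟨i, hi⟩ : ℕ) + (d + 1) := by omega

lemma qle_of_qocc_aux : ∀ N (σ τ : QPerm), τ.1 ≤ N → QOcc σ τ → QLe σ τ := by
  intro N
  induction N with
  | zero =>
      intro σ τ hN h
      obtain ⟨g, hg⟩ := h
      have hlen := isOcc_len_le hg
      have heq : σ = τ := qocc_eq_of_len ⟨g, hg⟩ (by omega)
      exact heq ▸ Relation.ReflTransGen.refl
  | succ N ih =>
      intro σ τ hN h
      obtain ⟨g, hg⟩ := h
      have hlen : σ.1 ≤ τ.1 := isOcc_len_le hg
      rcases eq_or_lt_of_le hlen with heq | hlt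
      · exact (qocc_eq_of_len ⟨g, hg⟩ heq) ▸ Relation.ReflTransGen.refl
      · obtain ⟨k, p⟩ := σ
        obtain ⟨n, t⟩ := τ
        simp only at hlt hN hlen
        obtain ⟨m, rfl⟩ : ∃ m, n = m + 1 := ⟨n - 1, by omega⟩
        change Fin k → Fin (m+1) at g
        change IsOcc qa p t g at hg
        have hkm : k ≤ m := by omega
        have hgb : ∀ j : Fin k, (g j : ℕ) < m + 1 := fun j => (g j).2
        have finish : ∀ (e : Fin m → Fin (m+1)) (hmono : StrictMono e)
            (hegap : ∀ (i : ℕ) (hh : i+1 < m), qa (i+1) = false →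
              ((e ⟨i+1, hh⟩ : ℕ) = (e ⟨i, Nat.lt_of_succ_lt hh⟩ : ℕ) + 1))
            (h' : Fin k → Fin m) (hcomp : ∀ j, e (h' j) = g j)
            (hgap : ∀ (i : ℕ) (hh : i+1 < k), qa (i+1) = false →
              ((h' ⟨i+1, hh⟩ : ℕ) = (h' ⟨i, Nat.lt_of_succ_lt hh⟩ : ℕ) + 1)),
            QLe ⟨k, p⟩ ⟨m+1, t⟩ := by
          intro e hmono hegap h' hcomp hgap
          have hocc : IsOcc qa p (restrict t e hmono.injective) h' :=
            isOcc_factor hmono hg h' hcomp hgap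
          have hQ : QLe ⟨k, p⟩ ⟨m, restrict t e hmono.injective⟩ :=
            ih _ _ (by show m ≤ N; omega) ⟨h', hocc⟩
          exact hQ.tail ⟨rfl, ⟨e, isOcc_restrict t e hmono hegap⟩⟩
        by_cases hk0 : k = 0
        · subst hk0
          refine finish Fin.castSucc Fin.strictMono_castSucc
            (fun i hh _ => rfl) (fun j => j.elim0) (fun j => j.elim0)
            (fun i hh _ => absurd hh (by omega))
        · have hk1 : 0 < k := Nat.pos_of_ne_zero hk0
          by_cases hg0 : 1 ≤ (g ⟨0, hk1⟩ : ℕ)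
          · -- delete first position
            have hge1 : ∀ j : Fin k, 1 ≤ (g j : ℕ) := by
              intro j
              have hle : (⟨0, hk1⟩ : Fin k) ≤ j := by simp [Fin.le_def]
              have := hg.1.monotone hle
              simp only [Fin.le_def] at this
              omega
            refine finish Fin.succ Fin.strictMono_succ (fun i hh _ => rfl)
              (fun j => ⟨(g j : ℕ) - 1, by have := hgb j; have := hge1 j; omega⟩)
              (fun j => Fin.ext (by simp only [Fin.val_succ]; have := hge1 j; omega))
              ?_
            intro i hh ha
            have hstep := hg.2.2 i hh ha
            simp only
            have h1 := hge1 ⟨i, Nat.lt_of_succ_lt hh⟩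
            omega
          · push_neg at hg0
            have hg00 : (g ⟨0, hk1⟩ : ℕ) = 0 := by omega
            have hklast : k - 1 < k := by omega
            by_cases hlast : (g ⟨k-1, hklast⟩ : ℕ) < m
            · -- delete last position
              have hltm : ∀ j : Fin k, (g j : ℕ) < m := by
                intro j
                have hjk : (j : ℕ) < k := j.2
                have hle : j ≤ (⟨k-1, hklast⟩ : Fin k) := by
                  simp only [Fin.le_def]; omega
                have := hg.1.monotone hle
                simp only [Fin.le_def] at this
                omega
              refine finish Fin.castSucc Fin.strictMono_castSucc (fun i hh _ => rfl)
                (fun j => ⟨(g j : ℕ), hltm j⟩)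
                (fun j => Fin.ext (by simp))
                ?_
              intro i hh ha
              have hstep := hg.2.2 i hh ha
              simpa using hstep
            · -- delete second position
              have hglast : (g ⟨k-1, hklast⟩ : ℕ) = m := by
                have := hgb ⟨k-1, hklast⟩; omega
              have hk2 : 2 ≤ k := by
                by_contra hc
                have hfe : (⟨k-1, hklast⟩ : Fin k) = ⟨0, hk1⟩ :=
                  Fin.ext (show k - 1 = 0 by omega)
                rw [hfe] at hglast
                omega
              have hm2 : 2 ≤ m := by omega
              have hge2v : ∀ j : Fin k, 1 ≤ (j : ℕ) → 2 ≤ (g j : ℕ) := by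
                intro j hj
                have hjk : (j : ℕ) < k := j.2
                have hsum : (j : ℕ) + (k - 1 - (j : ℕ)) < k := by omega
                have := occ_block_val hg (k - 1 - (j : ℕ)) (j : ℕ) hj hjk hsum
                rw [show (⟨(j : ℕ) + (k - 1 - (j : ℕ)), hsum⟩ : Fin k) = ⟨k-1, hklast⟩ from
                  Fin.ext (show (j : ℕ) + (k - 1 - (j : ℕ)) = k - 1 by omega)] at this
                rw [Fin.eta] at this
                omega
              set e : Fin m → Fin (m+1) := fun q =>
                ⟨if (q : ℕ) = 0 then 0 else (q : ℕ) + 1, by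
                  have := q.2; split <;> omega⟩ with he_def
              have heval : ∀ q : Fin m, (e q : ℕ) = if (q : ℕ) = 0 then 0 else (q : ℕ) + 1 :=
                fun q => rfl
              have hmono : StrictMono e := by
                intro a b hab
                rw [Fin.lt_def] at hab ⊢
                rw [heval a, heval b]
                split <;> split <;> omega
              set h' : Fin k → Fin m := fun j =>
                ⟨if (g j : ℕ) = 0 then 0 else (g j : ℕ) - 1, by
                  have := hgb j; split <;> omega⟩ with hh'_def
              have h'eval : ∀ j : Fin k,
                  (h' j : ℕ) = if (g j : ℕ) = 0 then 0 else (g j : ℕ) - 1 :=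
                fun j => rfl
              refine finish e hmono ?_ h' ?_ ?_
              · intro i hh ha
                have hi1 : 1 ≤ i := by have := ne_one_of_qa ha; omega
                rw [heval, heval]
                simp only [if_neg (show ¬(i+1 = 0) by omega), if_neg (show ¬(i = 0) by omega)]
              · intro j
                apply Fin.ext
                rw [heval, h'eval]
                by_cases hj : (g j : ℕ) = 0
                · simp [hj]
                · have hj1 : 1 ≤ (j : ℕ) := by
                    by_contra hc
                    have hje : j = ⟨0, hk1⟩ := Fin.ext (show (j : ℕ) = 0 by omega)
                    rw [hje] at hj; exact hj hg00
                  have := hge2v j hj1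
                  rw [if_neg hj, if_neg (by omega)]
                  omega
              · intro i hh ha
                have hi1 : 1 ≤ i := by have := ne_one_of_qa ha; omega
                have hstep := hg.2.2 i hh ha
                have hv1 := hge2v ⟨i, Nat.lt_of_succ_lt hh⟩ (show 1 ≤ i by omega)
                have hv2 := hge2v ⟨i+1, hh⟩ (show 1 ≤ i + 1 by omega)
                rw [h'eval, h'eval]
                rw [if_neg (by omega), if_neg (by omega)]
                omega

lemma qle_of_qocc {σ τ : QPerm} (h : QOcc σ τ) : QLe σ τ :=
  qle_of_qocc_aux τ.1 σ τ (le_refl _) h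

end Aux3

section Aux4

lemma mem_permsUpTo {N : ℕ} {z : QPerm} : z ∈ permsUpTo N ↔ z.1 ≤ N := by
  obtain ⟨n, p⟩ := z
  simp [permsUpTo, Finset.mem_sigma, Nat.lt_succ_iff]

lemma qMuAux_stable (σ : QPerm) : ∀ L (z : QPerm) (m : ℕ), z.1 ≤ L → z.1 ≤ m →
    qMuAux m σ z = qMuAux z.1 σ z := by
  intro L
  induction L with
  | zero =>
      intro z m hL hm
      have hz0 : z.1 = 0 := by omega
      cases m with
      | zero => rw [hz0]
      | succ m =>
          by_cases h : σ = z
          · rw [hz0]; simp [qMuAux, h]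
          · rw [hz0]
            simp only [qMuAux, if_neg h]
            have hempty : (permsUpTo z.1).filter (fun w => QLe σ w ∧ QLe w z ∧ w ≠ z) = ∅ := by
              ext w
              simp only [Finset.mem_filter, Finset.notMem_empty, iff_false, not_and]
              intro _ _ hw3 hw4
              exact absurd (qle_len_lt hw3 hw4) (by omega)
            rw [hempty]
            simp
  | succ L ih =>
      intro z m hL hm
      by_cases hzL : z.1 ≤ L
      · exact ih z m hzL hm
      · have hz : z.1 = L + 1 := by omega
        cases m with
        | zero => omega
        | succ m' =>
            by_cases h : σ = z
            · rw [hz]; simp [qMuAux, h]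
            · rw [hz]
              simp only [qMuAux, if_neg h]
              congr 1
              apply Finset.sum_congr rfl
              intro w hw
              simp only [Finset.mem_filter] at hw
              obtain ⟨hw0, hw1, hw2, hw3⟩ := hw
              have hwlt : w.1 < z.1 := qle_len_lt hw2 hw3
              rw [ih w m' (by omega) (by omega), ih w L (by omega) (by omega)]

lemma qMu_rec (σ ρ : QPerm) (h : σ ≠ ρ) :
    qMu σ ρ = -∑ z ∈ (permsUpTo ρ.1).filter (fun z => QLe σ z ∧ QLe z ρ ∧ z ≠ ρ),
      qMu σ z := by
  obtain ⟨n, p⟩ := ρ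
  cases n with
  | zero =>
      have hempty : (permsUpTo (⟨0, p⟩ : QPerm).1).filter
          (fun z => QLe σ z ∧ QLe z ⟨0, p⟩ ∧ z ≠ ⟨0, p⟩) = ∅ := by
        ext w
        simp only [Finset.mem_filter, Finset.notMem_empty, iff_false, not_and]
        intro _ _ hw3 hw4
        have hlt : w.fst < 0 := qle_len_lt hw3 hw4
        omega
      rw [hempty]
      show qMuAux 0 σ ⟨0, p⟩ = -0
      simp [qMuAux, h]
  | succ n' =>
      show qMuAux (n'+1) σ ⟨n'+1, p⟩ = _
      simp only [qMuAux, if_neg h]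
      congr 1
      apply Finset.sum_congr rfl
      intro w hw
      simp only [Finset.mem_filter] at hw
      obtain ⟨hw0, hw1, hw2, hw3⟩ := hw
      have hwlt : w.1 < n'+1 := qle_len_lt hw2 hw3
      exact qMuAux_stable σ w.1 w n' (le_refl _) (by omega)

lemma qMu_sum_closed (σ ρ : QPerm) (h : σ ≠ ρ) :
    ∑ z ∈ (permsUpTo ρ.1).filter (fun z => QLe σ z ∧ QLe z ρ), qMu σ z = 0 := by
  by_cases hσρ : QLe σ ρ
  · have hsplit : (permsUpTo ρ.1).filter (fun z => QLe σ z ∧ QLe z ρ)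
        = insert ρ ((permsUpTo ρ.1).filter (fun z => QLe σ z ∧ QLe z ρ ∧ z ≠ ρ)) := by
      ext w
      simp only [Finset.mem_insert, Finset.mem_filter, mem_permsUpTo]
      constructor
      · rintro ⟨hw1, hw2, hw3⟩
        by_cases hwρ : w = ρ
        · exact Or.inl hwρ
        · exact Or.inr ⟨hw1, hw2, hw3, hwρ⟩
      · rintro (rfl | ⟨hw1, hw2, hw3, _⟩)
        · exact ⟨le_refl _, hσρ, Relation.ReflTransGen.refl⟩
        · exact ⟨hw1, hw2, hw3⟩
    rw [hsplit, Finset.sum_insert (by simp [Finset.mem_filter])]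
    rw [qMu_rec σ ρ h]
    exact neg_add_cancel _
  · have hempty : (permsUpTo ρ.1).filter (fun z => QLe σ z ∧ QLe z ρ) = ∅ := by
      ext w
      simp only [Finset.mem_filter, Finset.notMem_empty, iff_false, not_and]
      intro _ hw2 hw3
      exact absurd (hw2.trans hw3) hσρ
    rw [hempty]
    simp

end Aux4

section Main

lemma main_aux : ∀ N (σ τ : QPerm), τ.1 ≤ N → 1 < σ.1 →
    ∀ f : Fin σ.1 → Fin τ.1, IsOcc qa σ.2 τ.2 f →
    (∀ g : Fin σ.1 → Fin τ.1, IsOcc qa σ.2 τ.2 g → g = f) →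
    (∀ i j : Fin σ.1, (i : ℕ) = 0 → (j : ℕ) = 1 →
      1 ≤ (f i : ℕ) ∧ (f j : ℕ) ≠ (f i : ℕ) + 1) →
    qMu σ τ = 0 := by
  intro N
  induction N with
  | zero =>
      intro σ τ hN hk f hf _ _
      have h0 : (0:ℕ) < σ.1 := by omega
      have hlt := (f ⟨0, h0⟩).2
      exact absurd hlt (by omega)
  | succ N ih =>
      intro σ τ hN hk f hf huniq hcond
      obtain ⟨k, pσ⟩ := σ
      obtain ⟨n, t⟩ := τ
      simp only at hN hk
      change Fin k → Fin n at f
      change IsOcc qa pσ t f at hf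
      change ∀ g : Fin k → Fin n, IsOcc qa pσ t g → g = f at huniq
      have h0k : 0 < k := by omega
      have h1k : 1 < k := hk
      obtain ⟨hf0, hgapf⟩ := hcond ⟨0, h0k⟩ ⟨1, h1k⟩ rfl rfl
      have hmono := hf.1
      have h01 : (f ⟨0, h0k⟩ : ℕ) < (f ⟨1, h1k⟩ : ℕ) :=
        hmono (show (⟨0, h0k⟩ : Fin k) < ⟨1, h1k⟩ by simp [Fin.lt_def])
      have hgap2 : (f ⟨0, h0k⟩ : ℕ) + 2 ≤ (f ⟨1, h1k⟩ : ℕ) := by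
        rcases Nat.lt_or_ge ((f ⟨0, h0k⟩ : ℕ) + 1) (f ⟨1, h1k⟩ : ℕ) with h | h
        · omega
        · exact absurd (by omega : (f ⟨1, h1k⟩ : ℕ) = (f ⟨0, h0k⟩ : ℕ) + 1) hgapf
      have hlt2 : 1 + (k - 2) < k := by omega
      have hlast := sm_gap hmono (k - 2) 1 h1k hlt2
      have hub := (f ⟨1 + (k - 2), hlt2⟩).2
      have hnk2 : k + 2 ≤ n := by omega
      obtain ⟨n', rfl⟩ : ∃ n', n = n' + 1 := ⟨n - 1, by omega⟩
      have hmonoS : StrictMono (Fin.succ : Fin n' → Fin (n' + 1)) := Fin.strictMono_succ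
      set A : QPerm := ⟨n', restrict t Fin.succ hmonoS.injective⟩ with hA
      have hcov : QCov A ⟨n' + 1, t⟩ :=
        ⟨rfl, ⟨Fin.succ, isOcc_restrict t Fin.succ hmonoS (fun i hh _ => rfl)⟩⟩
      have hne : (⟨k, pσ⟩ : QPerm) ≠ ⟨n' + 1, t⟩ := by
        intro he
        have := congrArg Sigma.fst he
        simp only at this
        omega
      have hneA : (⟨k, pσ⟩ : QPerm) ≠ A := by
        intro he
        have := congrArg Sigma.fst he
        simp only [hA] at this
        omega
      rw [qMu_rec ⟨k, pσ⟩ ⟨n' + 1, t⟩ hne]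
      rw [← Finset.sum_filter_add_sum_filter_not
        ((permsUpTo (⟨n' + 1, t⟩ : QPerm).1).filter
          (fun z => QLe ⟨k, pσ⟩ z ∧ QLe z ⟨n' + 1, t⟩ ∧ z ≠ ⟨n' + 1, t⟩))
        (fun z => QLe z A) (fun z => qMu ⟨k, pσ⟩ z)]
      have hS1 : (((permsUpTo (⟨n' + 1, t⟩ : QPerm).1).filter
            (fun z => QLe ⟨k, pσ⟩ z ∧ QLe z ⟨n' + 1, t⟩ ∧ z ≠ ⟨n' + 1, t⟩)).filter
            (fun z => QLe z A))
          = (permsUpTo A.1).filter (fun z => QLe ⟨k, pσ⟩ z ∧ QLe z A) := by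
        ext w
        simp only [Finset.mem_filter, mem_permsUpTo]
        constructor
        · rintro ⟨⟨hw1, hw2, hw3, hw4⟩, hw5⟩
          exact ⟨qle_len_le hw5, hw2, hw5⟩
        · rintro ⟨hw1, hw2, hw3⟩
          have hwτ : QLe w ⟨n' + 1, t⟩ := hw3.tail hcov
          have hwlen : w.1 ≤ n' := by
            have := qle_len_le hw3
            simpa [hA] using this
          refine ⟨⟨?_, hw2, hwτ, ?_⟩, hw3⟩
          · show w.1 ≤ n' + 1
            omega
          · intro he
            rw [he] at hwlen
            simp only at hwlen
            omega
      rw [hS1, qMu_sum_closed ⟨k, pσ⟩ A hneA]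
      have hS2 : ∀ w ∈ (((permsUpTo (⟨n' + 1, t⟩ : QPerm).1).filter
            (fun z => QLe ⟨k, pσ⟩ z ∧ QLe z ⟨n' + 1, t⟩ ∧ z ≠ ⟨n' + 1, t⟩)).filter
            (fun z => ¬ QLe z A)), qMu ⟨k, pσ⟩ w = 0 := by
        intro w hw
        simp only [Finset.mem_filter, mem_permsUpTo] at hw
        obtain ⟨⟨hwU, hwσ, hwτ, hwne⟩, hwA⟩ := hw
        obtain ⟨mw, pw⟩ := w
        obtain ⟨g, hg⟩ := qocc_of_qle hwτ
        obtain ⟨fz, hfz⟩ := qocc_of_qle hwσ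
        change Fin mw → Fin (n' + 1) at g
        change IsOcc qa pw t g at hg
        change Fin k → Fin mw at fz
        change IsOcc qa pσ pw fz at hfz
        have hmwlt : mw < n' + 1 := by
          have := qle_len_lt hwτ hwne
          simpa using this
        have hmwk : k ≤ mw := isOcc_len_le hfz
        have h0mw : 0 < mw := by omega
        -- first entry of the occurrence of w in τ is at position 0
        have hg0 : (g ⟨0, h0mw⟩ : ℕ) = 0 := by
          by_contra hc
          have hge1 : ∀ j : Fin mw, 1 ≤ (g j : ℕ) := by
            intro j
            have hle : (⟨0, h0mw⟩ : Fin mw) ≤ j := by simp [Fin.le_def]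
            have := hg.1.monotone hle
            simp only [Fin.le_def] at this
            omega
          have hocc : IsOcc qa pw (restrict t Fin.succ hmonoS.injective)
              (fun j => ⟨(g j : ℕ) - 1, by have := (g j).2; have := hge1 j; omega⟩) := by
            refine isOcc_factor hmonoS hg _
              (fun j => Fin.ext (by simp only [Fin.val_succ]; have := hge1 j; omega)) ?_
            intro i hh ha
            have hstep := hg.2.2 i hh ha
            simp only
            have := hge1 ⟨i, Nat.lt_of_succ_lt hh⟩
            omega
          exact hwA (qle_of_qocc ⟨_, hocc⟩)
        -- the composite is the unique occurrence f
        have hgf : g ∘ fz = f := huniq (g ∘ fz) (isOcc_comp hfz hg)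
        -- apply the induction hypothesis to (σ, w)
        apply ih ⟨k, pσ⟩ ⟨mw, pw⟩ (show mw ≤ N by omega) hk fz hfz
        · intro g' hg'
          have heq : g ∘ g' = g ∘ fz := by
            rw [hgf]
            exact huniq (g ∘ g') (isOcc_comp hg' hg)
          funext j
          exact hg.1.injective (congrFun heq j)
        · intro i j hi hj
          have hie : i = ⟨0, h0k⟩ := Fin.ext hi
          have hje : j = ⟨1, h1k⟩ := Fin.ext hj
          subst hie hje
          have hfval : ∀ x : Fin k, (g (fz x) : ℕ) = (f x : ℕ) := by
            intro x
            have hx := congrFun hgf x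
            exact congrArg Fin.val hx
          have hfz0 : 1 ≤ (fz ⟨0, h0k⟩ : ℕ) := by
            by_contra hc
            have hze : fz ⟨0, h0k⟩ = ⟨0, h0mw⟩ := Fin.ext (by omega)
            have := hfval ⟨0, h0k⟩
            rw [hze, hg0] at this
            omega
          refine ⟨hfz0, ?_⟩
          intro hcontra
          have hplt : (fz ⟨0, h0k⟩ : ℕ) + 1 < mw := by
            have := (fz ⟨1, h1k⟩).2
            omega
          have hgstep := hg.2.2 (fz ⟨0, h0k⟩ : ℕ) hplt (qa_eq_false (by omega))
          rw [show (⟨(fz ⟨0, h0k⟩ : ℕ), Nat.lt_of_succ_lt hplt⟩ : Fin mw) = fz ⟨0, h0k⟩ from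
            Fin.ext rfl] at hgstep
          have hje2 : fz ⟨1, h1k⟩ = ⟨(fz ⟨0, h0k⟩ : ℕ) + 1, hplt⟩ := Fin.ext hcontra
          have hv1 := hfval ⟨1, h1k⟩
          have hv0 := hfval ⟨0, h0k⟩
          rw [hje2, hgstep] at hv1
          exact hgapf (by omega)
      rw [Finset.sum_eq_zero hS2]
      simp

end Main

/-- If `σ` occurs precisely once in `τ`, the occurrence is not consecutive
(the first two entries of the occurrence are not adjacent in `τ`), and the
occurrence involves none of the first, second, and last entries of `τ`,
then `μ(σ,τ) = 0`. -/
theorem unique_occurrence_none_nonconsecutive (σ τ : QPerm) (hle : QLe σ τ)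
    (hk : 1 < σ.1)
    (f : Fin σ.1 → Fin τ.1) (hf : IsOcc qa σ.2 τ.2 f)
    (huniq : ∀ g : Fin σ.1 → Fin τ.1, IsOcc qa σ.2 τ.2 g → g = f)
    (hnc : ∀ i j : Fin σ.1, (i : ℕ) = 0 → (j : ℕ) = 1 →
      (f j : ℕ) ≠ (f i : ℕ) + 1)
    (h0 : ¬ Involves f 0) (h1 : ¬ Involves f 1) (hn : ¬ Involves f (τ.1 - 1)) :
    qMu σ τ = 0 := by
  apply main_aux τ.1 σ τ (le_refl _) hk f hf huniq
  intro i j hi hj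
  refine ⟨?_, hnc i j hi hj⟩
  rcases Nat.eq_zero_or_pos (f i : ℕ) with h | h
  · exact absurd ⟨i, h⟩ h0
  · omega
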